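/- arXiv:1209.1422 — 3 statements merged into one kernel-verified Lean document; each statement's English description precedes it below -/
import Mathlib

section
/- Isolation followed by coisolation reconstructs a tagged copy of a multi-action: for a multi-action α over actions in 𝔸, set A ⊆ 𝔸, and injective functions s, r : 𝔸 → Act with disjoint images fresh for 𝔸, define isol(α) by replacing each a ∈ A with a ⊔ s(a) and each b ∉ A with r(b), and coisol(α) by replacing each a ∈ A with r(a) and each b ∉ A with b ⊔ s(b). Then isol(α) ⊔ coisol(α) = (⊔_{a in the support of α} n_a copies of (s(a) ⊔ r(a))) ⊔ α, where n_a is the multiplicity of a in α; in particular the remainder α shares no actions with any s(a) ⊔ r(a). -/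
open Classical in
/-- The `A`-isolation of a multi-action: replace each `a ∈ A` by `a ⊔ s(a)`
and each `b ∉ A` by `r(b)`. -/
noncomputable def isol {Act : Type*} (A : Set Act) (s r : Act → Act)
    (α : Multiset Act) : Multiset Act :=
  α.bind fun a => if a ∈ A then {a, s a} else {r a}

open Classical in
/-- The `A`-coisolation of a multi-action: replace each `a ∈ A` by `r(a)`
and each `b ∉ A` by `b ⊔ s(b)`. -/
noncomputable def coisol {Act : Type*} (A : Set Act) (s r : Act → Act)
    (α : Multiset Act) : Multiset Act :=
  α.bind fun a => if a ∈ A then {r a} else {a, s a}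

/-- Isolation joined with coisolation reconstructs a tagged copy of the
multi-action: `isol(α) ⊔ coisol(α) = (⊔_{a ∈ α} s(a) ⊔ r(a)) ⊔ α`, and the
remainder `α` shares no actions with any `s(a) ⊔ r(a)`. -/
theorem stmt9 {Act : Type*} (𝔸 A : Set Act) (s r : Act → Act)
    (hA : A ⊆ 𝔸)
    (hs : Set.InjOn s 𝔸) (hr : Set.InjOn r 𝔸)
    (himg : (s '' 𝔸) ∩ (r '' 𝔸) = ∅)
    (hfresh : ((s '' 𝔸) ∪ (r '' 𝔸)) ∩ 𝔸 = ∅)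
    (α : Multiset Act) (hα : ∀ a ∈ α, a ∈ 𝔸) :
    isol A s r α + coisol A s r α =
        (α.bind fun a => ({s a, r a} : Multiset Act)) + α ∧
      ∀ a ∈ 𝔸, Disjoint α ({s a, r a} : Multiset Act) := by
  constructor
  · clear hα
    induction α using Multiset.induction with
    | empty => simp [isol, coisol]
    | cons a α ih =>
      simp only [isol, coisol, Multiset.cons_bind] at *
      by_cases h : a ∈ A <;> simp only [if_pos, if_neg, h, if_true, if_false] <;>
      · rw [add_add_add_comm, ih, ← Multiset.singleton_add a α,
          show ({a, s a} : Multiset Act) = {a} + {s a} from rfl,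
          show ({s a, r a} : Multiset Act) = {s a} + {r a} from rfl]
        abel
  · intro a ha
    rw [Multiset.disjoint_left]
    intro b hb hmem
    have hb𝔸 : b ∈ 𝔸 := hα b hb
    have : b ∈ ((s '' 𝔸) ∪ (r '' 𝔸)) := by
      simp only [Multiset.insert_eq_cons, Multiset.mem_cons, Multiset.mem_singleton] at hmem
      rcases hmem with h | h
      · exact Or.inl ⟨a, ha, h.symm⟩
      · exact Or.inr ⟨a, ha, h.symm⟩
    have : b ∈ (((s '' 𝔸) ∪ (r '' 𝔸)) ∩ 𝔸) := ⟨this, hb𝔸⟩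
    rw [hfresh] at this
    exact this
end

section
/- Splitting a multi-action is the identity: for any τ-free multi-action α with actions in 𝔸 and any A ⊆ 𝔸, applying the communication rules {s(a) ⊔ r(a) → tau : a ∈ 𝔸} to isol(α) ⊔ coisol(α), then deleting all occurrences of tau, yields α, and the result contains no actions from img(s) ∪ img(r). -/
open Classical in
/-- The communication function for a (possibly infinite) set of rules `C`:
as long as some rule's nonempty left-hand side is contained in the argument,
remove one occurrence of it and add the rule's right-hand side. -/
noncomputable def ΓS {Act : Type*} [DecidableEq Act]
    (C : Set (Multiset Act × Act)) (α : Multiset Act) : Multiset Act :=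
  if h : ∃ rule ∈ C, rule.1 ≠ 0 ∧ rule.1 ≤ α then
    h.choose.2 ::ₘ ΓS C (α - h.choose.1)
  else α
termination_by Multiset.card α
decreasing_by
  obtain ⟨-, hne, hle⟩ := h.choose_spec
  have hpos : 0 < Multiset.card h.choose.1 := Multiset.card_pos.2 hne
  have h1 := Multiset.card_sub hle
  have h2 := Multiset.card_le_card hle
  omega

lemma isol_add_coisol {Act : Type*} (A : Set Act) (s r : Act → Act) (α : Multiset Act) :
    isol A s r α + coisol A s r α = α + α.map s + α.map r := by
  induction α using Multiset.induction with
  | empty => simp [isol, coisol]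
  | cons a α ih =>
    simp only [isol, coisol, Multiset.cons_bind, Multiset.map_cons] at *
    split_ifs with h <;>
    · rw [add_add_add_comm, ih]
      simp only [Multiset.insert_eq_cons, ← Multiset.singleton_add]
      abel

lemma gamma_eval {Act : Type*} [DecidableEq Act] (𝔸 : Set Act) (s r : Act → Act) (tau : Act)
    (hs : Set.InjOn s 𝔸) (hr : Set.InjOn r 𝔸)
    (himg : (s '' 𝔸) ∩ (r '' 𝔸) = ∅)
    (hfresh : ((s '' 𝔸) ∪ (r '' 𝔸)) ∩ 𝔸 = ∅)
    (htau : tau ∉ 𝔸 ∪ (s '' 𝔸) ∪ (r '' 𝔸)) :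
    ∀ γ : Multiset Act, (∀ a ∈ γ, a ∈ 𝔸) → ∀ β : Multiset Act, (∀ a ∈ β, a ∈ 𝔸) →
      ∀ δ : Multiset Act, (∀ x ∈ δ, x = tau) →
      ΓS {rule | ∃ a ∈ 𝔸, rule = (({s a, r a} : Multiset Act), tau)}
        (δ + β + γ.map s + γ.map r)
        = Multiset.replicate (Multiset.card γ) tau + δ + β := by
  have hsA : ∀ a ∈ 𝔸, s a ∈ s '' 𝔸 := fun a ha => ⟨a, ha, rfl⟩
  have hrA : ∀ a ∈ 𝔸, r a ∈ r '' 𝔸 := fun a ha => ⟨a, ha, rfl⟩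
  intro γ
  induction γ using Multiset.strongInductionOn with
  | _ γ ih =>
  intro hγ β hβ δ hδ
  -- key: locate an element `s a` in the big multiset when `a ∈ 𝔸`
  have locs : ∀ a ∈ 𝔸, s a ∈ δ + β + γ.map s + γ.map r → a ∈ γ := by
    intro a ha hmem
    rcases Multiset.mem_add.1 hmem with hmem | hmem
    · rcases Multiset.mem_add.1 hmem with hmem | hmem
      · rcases Multiset.mem_add.1 hmem with hmem | hmem
        · exact absurd (hδ _ hmem ▸ Or.inl (Or.inr (hsA a ha))) htau
        · exact absurd (hfresh ▸ show s a ∈ (s '' 𝔸 ∪ r '' 𝔸) ∩ 𝔸 from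
            ⟨Or.inl (hsA a ha), hβ _ hmem⟩) (Set.notMem_empty _)
      · obtain ⟨b, hb, hba⟩ := Multiset.mem_map.1 hmem
        exact hs (hγ b hb) ha hba ▸ hb
    · obtain ⟨b, hb, hba⟩ := Multiset.mem_map.1 hmem
      exact absurd (himg ▸ show s a ∈ (s '' 𝔸) ∩ (r '' 𝔸) from
        ⟨hsA a ha, hba ▸ hrA b (hγ b hb)⟩) (Set.notMem_empty _)
  have locr : ∀ a ∈ 𝔸, r a ∈ δ + β + γ.map s + γ.map r → a ∈ γ := by
    intro a ha hmem
    rcases Multiset.mem_add.1 hmem with hmem | hmem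
    · rcases Multiset.mem_add.1 hmem with hmem | hmem
      · rcases Multiset.mem_add.1 hmem with hmem | hmem
        · exact absurd (hδ _ hmem ▸ Or.inr (hrA a ha)) htau
        · exact absurd (hfresh ▸ show r a ∈ (s '' 𝔸 ∪ r '' 𝔸) ∩ 𝔸 from
            ⟨Or.inr (hrA a ha), hβ _ hmem⟩) (Set.notMem_empty _)
      · obtain ⟨b, hb, hba⟩ := Multiset.mem_map.1 hmem
        exact absurd (himg ▸ show s b ∈ (s '' 𝔸) ∩ (r '' 𝔸) from
          ⟨hsA b (hγ b hb), hba ▸ hrA a ha⟩) (Set.notMem_empty _)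
    · obtain ⟨b, hb, hba⟩ := Multiset.mem_map.1 hmem
      exact hr (hγ b hb) ha hba ▸ hb
  rw [ΓS]
  by_cases hex : ∃ rule ∈ {rule | ∃ a ∈ 𝔸, rule = (({s a, r a} : Multiset Act), tau)},
      rule.1 ≠ 0 ∧ rule.1 ≤ δ + β + γ.map s + γ.map r
  · rw [dif_pos hex]
    obtain ⟨hmem, hne, hle⟩ := hex.choose_spec
    obtain ⟨a, ha, hrule⟩ := hmem
    rw [hrule] at hle ⊢
    simp only
    have hsa : s a ∈ δ + β + γ.map s + γ.map r :=
      Multiset.mem_of_le hle (by simp)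
    have haγ : a ∈ γ := locs a ha hsa
    obtain ⟨γ', rfl⟩ : ∃ γ', γ = a ::ₘ γ' := ⟨γ.erase a, (Multiset.cons_erase haγ).symm⟩
    have hsub : δ + β + (a ::ₘ γ').map s + (a ::ₘ γ').map r - {s a, r a}
        = δ + β + γ'.map s + γ'.map r := by
      have : δ + β + (a ::ₘ γ').map s + (a ::ₘ γ').map r
          = ({s a, r a} : Multiset Act) + (δ + β + γ'.map s + γ'.map r) := by
        simp only [Multiset.map_cons, Multiset.insert_eq_cons, ← Multiset.singleton_add,
          Multiset.map_add, Multiset.map_singleton]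
        abel
      rw [this, add_tsub_cancel_left]
    rw [hsub, ih γ' (Multiset.lt_cons_self _ _) (fun b hb => hγ b (Multiset.mem_cons_of_mem hb)) β hβ δ hδ]
    simp only [Multiset.card_cons, Multiset.replicate_succ, ← Multiset.singleton_add,
      Multiset.card_add, Multiset.card_singleton, Multiset.replicate_add,
      Multiset.replicate_one]
    abel
  · rw [dif_neg hex]
    have hγ0 : γ = 0 := by
      by_contra h0
      obtain ⟨a, haγ⟩ := Multiset.exists_mem_of_ne_zero h0
      have ha : a ∈ 𝔸 := hγ a haγ
      apply hex
      refine ⟨(({s a, r a} : Multiset Act), tau), ⟨a, ha, rfl⟩, by simp, ?_⟩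
      obtain ⟨γ', rfl⟩ : ∃ γ', γ = a ::ₘ γ' := ⟨γ.erase a, (Multiset.cons_erase haγ).symm⟩
      have : δ + β + (a ::ₘ γ').map s + (a ::ₘ γ').map r
          = ({s a, r a} : Multiset Act) + (δ + β + γ'.map s + γ'.map r) := by
        simp only [Multiset.map_cons, Multiset.insert_eq_cons, ← Multiset.singleton_add,
          Multiset.map_add, Multiset.map_singleton]
        abel
      rw [this]
      exact Multiset.le_add_right _ _
    subst hγ0
    simp

/-- Splitting a multi-action is the identity: applying the communications
`{s(a) ⊔ r(a) → tau : a ∈ 𝔸}` to `isol(α) ⊔ coisol(α)` and then hiding `tau`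
yields `α` back, and the communicated multi-action contains no actions from
`img(s) ∪ img(r)`. -/
theorem stmt10 {Act : Type*} [DecidableEq Act] (𝔸 A : Set Act)
    (s r : Act → Act) (tau : Act)
    (hA : A ⊆ 𝔸)
    (hs : Set.InjOn s 𝔸) (hr : Set.InjOn r 𝔸)
    (himg : (s '' 𝔸) ∩ (r '' 𝔸) = ∅)
    (hfresh : ((s '' 𝔸) ∪ (r '' 𝔸)) ∩ 𝔸 = ∅)
    (htau : tau ∉ 𝔸 ∪ (s '' 𝔸) ∪ (r '' 𝔸))
    (α : Multiset Act) (hα : ∀ a ∈ α, a ∈ 𝔸) :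
    Multiset.filter (· ≠ tau)
        (ΓS {rule | ∃ a ∈ 𝔸, rule = (({s a, r a} : Multiset Act), tau)}
          (isol A s r α + coisol A s r α)) = α ∧
      ∀ x ∈ ΓS {rule | ∃ a ∈ 𝔸, rule = (({s a, r a} : Multiset Act), tau)}
          (isol A s r α + coisol A s r α),
        x ∉ (s '' 𝔸) ∪ (r '' 𝔸) := by
  have key : ΓS {rule | ∃ a ∈ 𝔸, rule = (({s a, r a} : Multiset Act), tau)}
      (isol A s r α + coisol A s r α)
      = Multiset.replicate (Multiset.card α) tau + 0 + α := by
    have := gamma_eval 𝔸 s r tau hs hr himg hfresh htau α hα α hα 0 (by simp)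
    rw [isol_add_coisol]
    simpa using this
  rw [key]
  constructor
  · rw [Multiset.filter_add, Multiset.filter_add]
    have h1 : Multiset.filter (· ≠ tau) (Multiset.replicate (Multiset.card α) tau)
        = 0 := by
      rw [Multiset.filter_eq_nil]
      intro a ha
      simp [Multiset.eq_of_mem_replicate ha]
    have h2 : Multiset.filter (· ≠ tau) α = α := by
      rw [Multiset.filter_eq_self]
      intro a ha hatau
      exact htau (hatau ▸ Or.inl (Or.inl (hα a ha)))
    simp [h1, h2]
  · intro x hx
    rcases Multiset.mem_add.1 hx with hx | hx
    · rcases Multiset.mem_add.1 hx with hx | hx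
      · rw [Multiset.eq_of_mem_replicate hx]
        intro h
        exact htau (Or.elim h (fun h => Or.inl (Or.inr h)) Or.inr)
      · simp at hx
    · intro h
      exact absurd (hfresh ▸ show x ∈ (s '' 𝔸 ∪ r '' 𝔸) ∩ 𝔸 from ⟨h, hα x hx⟩)
        (Set.notMem_empty _)
end

section
/- Blocking a fresh unpaired tag deadlocks the isolation: with isol defined as replacing a ∈ A by a ⊔ s(a) and b ∉ A by r(b) on a nonempty τ-free multi-action α with support in 𝔸, every multi-action isol(α) contains an action from img(s) ∪ img(r) but never contains both s(a) and r(a) for the same a; hence applying the blocking operator ∂_{img(s) ∪ img(r)} after the communication Γ_{ {s(a)⊔r(a)→tau} } to isol(α) yields deadlock (the multi-action is forbidden). -/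
open Classical in
/-- The blocking operator `∂_B`: a multi-action containing an action of `B`
is forbidden (deadlock, `none`); otherwise it is left unchanged. -/
noncomputable def block {Act : Type*} (B : Set Act) (α : Multiset Act) :
    Option (Multiset Act) :=
  if ∀ x ∈ α, x ∉ B then some α else none

/-- Blocking a fresh unpaired tag deadlocks the isolation: `isol(α)` always
contains an action from `img(s) ∪ img(r)` but never both `s(a)` and `r(a)`
for the same `a`; hence blocking `img(s) ∪ img(r)` after the communication
`{s(a) ⊔ r(a) → tau : a ∈ 𝔸}` yields deadlock. -/
theorem stmt15 {Act : Type*} [DecidableEq Act] (𝔸 A : Set Act)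
    (s r : Act → Act) (tau : Act)
    (hA : A ⊆ 𝔸)
    (hs : Set.InjOn s 𝔸) (hr : Set.InjOn r 𝔸)
    (himg : (s '' 𝔸) ∩ (r '' 𝔸) = ∅)
    (hfresh : ((s '' 𝔸) ∪ (r '' 𝔸)) ∩ 𝔸 = ∅)
    (α : Multiset Act) (hne : α ≠ 0) (hα : ∀ a ∈ α, a ∈ 𝔸) :
    (∃ x ∈ isol A s r α, x ∈ (s '' 𝔸) ∪ (r '' 𝔸)) ∧
      (∀ a ∈ 𝔸, ¬ (s a ∈ isol A s r α ∧ r a ∈ isol A s r α)) ∧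
      block ((s '' 𝔸) ∪ (r '' 𝔸))
        (ΓS {rule | ∃ a ∈ 𝔸, rule = (({s a, r a} : Multiset Act), tau)}
          (isol A s r α)) = none := by

  classical
  -- basic disjointness facts
  have hsr : ∀ a ∈ 𝔸, ∀ b ∈ 𝔸, s a ≠ r b := by
    intro a ha b hb h
    have : s a ∈ (s '' 𝔸) ∩ (r '' 𝔸) := ⟨⟨a, ha, rfl⟩, ⟨b, hb, h.symm⟩⟩
    simp [himg] at this
  have hsA : ∀ a ∈ 𝔸, s a ∉ 𝔸 := by
    intro a ha h
    have : s a ∈ ((s '' 𝔸) ∪ (r '' 𝔸)) ∩ 𝔸 := ⟨Or.inl ⟨a, ha, rfl⟩, h⟩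
    simp [hfresh] at this
  have hrA : ∀ a ∈ 𝔸, r a ∉ 𝔸 := by
    intro a ha h
    have : r a ∈ ((s '' 𝔸) ∪ (r '' 𝔸)) ∩ 𝔸 := ⟨Or.inr ⟨a, ha, rfl⟩, h⟩
    simp [hfresh] at this
  have hmem : ∀ x, x ∈ isol A s r α ↔
      ∃ b ∈ α, x ∈ (if b ∈ A then ({b, s b} : Multiset Act) else {r b}) := by
    intro x; simp [isol, Multiset.mem_bind]
  -- part 2 first
  have part2 : ∀ a ∈ 𝔸, ¬ (s a ∈ isol A s r α ∧ r a ∈ isol A s r α) := by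
    rintro a ha ⟨h1, h2⟩
    have haA : a ∈ A := by
      rcases (hmem _).1 h1 with ⟨b, hb, hx⟩
      have hb𝔸 := hα b hb
      by_cases hbA : b ∈ A
      · simp [hbA, Multiset.mem_cons, Multiset.mem_singleton] at hx
        rcases hx with h | h
        · exact absurd (h ▸ hb𝔸) (hsA a ha)
        · exact hs ha hb𝔸 h ▸ hbA
      · simp [hbA, Multiset.mem_singleton] at hx
        exact absurd hx (hsr a ha b hb𝔸)
    have haA' : a ∉ A := by
      rcases (hmem _).1 h2 with ⟨b, hb, hx⟩
      have hb𝔸 := hα b hb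
      by_cases hbA : b ∈ A
      · simp [hbA, Multiset.mem_cons, Multiset.mem_singleton] at hx
        rcases hx with h | h
        · exact absurd (h ▸ hb𝔸) (hrA a ha)
        · exact absurd h.symm (hsr b hb𝔸 a ha)
      · simp [hbA, Multiset.mem_singleton] at hx
        intro h
        exact hbA (hr ha hb𝔸 hx ▸ h)
    exact haA' haA
  -- part 1
  have part1 : ∃ x ∈ isol A s r α, x ∈ (s '' 𝔸) ∪ (r '' 𝔸) := by
    obtain ⟨a, ha⟩ := Multiset.exists_mem_of_ne_zero hne
    have ha𝔸 := hα a ha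
    by_cases haA : a ∈ A
    · exact ⟨s a, (hmem _).2 ⟨a, ha, by simp [haA]⟩, Or.inl ⟨a, ha𝔸, rfl⟩⟩
    · exact ⟨r a, (hmem _).2 ⟨a, ha, by simp [haA]⟩, Or.inr ⟨a, ha𝔸, rfl⟩⟩
  refine ⟨part1, part2, ?_⟩
  -- no rule applies
  have hno : ¬ ∃ rule ∈ {rule | ∃ a ∈ 𝔸, rule = (({s a, r a} : Multiset Act), tau)},
      rule.1 ≠ 0 ∧ rule.1 ≤ isol A s r α := by
    rintro ⟨rule, ⟨a, ha, rfl⟩, -, hle⟩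
    have hsub := Multiset.subset_of_le hle
    exact part2 a ha ⟨hsub (by simp), hsub (by simp)⟩
  rw [ΓS, dif_neg hno, block, if_neg]
  push_neg
  exact part1
end
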